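/- Let N_R, N_T, K, Q be positive integers, σ > 0 a real number, and Σ an (N_T·N_R)×(N_T·N_R) complex matrix. For each q = 1,…,Q let v_q ∈ ℂ^{N_T}, let W_q be a complex N_R×K matrix with W_qᴴ·W_q invertible, and let Π_q be a complex N_R×K matrix with Π_qᴴ·Π_q = I_K and Π_q·Π_qᴴ = W_q·(W_qᴴ·W_q)⁻¹·W_qᴴ. Let X = [v_1^* ⊗ W_1, …, v_Q^* ⊗ W_Q], Ξ = σ²·blkdiag(W_1ᴴ·W_1, …, W_Qᴴ·W_Q), and X_Π = [v_1^* ⊗ Π_1, …, v_Q^* ⊗ Π_Q]. Then det(I_{KQ} + Ξ⁻¹·Xᴴ·Σ·X) = det(I_{KQ} + σ⁻²·X_Πᴴ·Σ·X_Π). Hence replacing each combiner W_q by an orthonormal-column matrix Π_q with the same column space leaves the mutual-information objective unchanged, so the orthogonality constraints W_qᴴ·W_q = I_K do not affect the optimal value of the mutual information. -/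
import Mathlib


open Matrix Finset
open scoped Kronecker

/-- Replacing each combiner `W_q` by an orthonormal-column matrix `Π_q`
with the same column-space projector leaves the mutual-information objective unchanged:
`det(I + Ξ⁻¹·Xᴴ·Σ·X) = det(I + σ⁻²·X_Πᴴ·Σ·X_Π)`. -/
theorem stmt_3 (N_R N_T K Q : ℕ) (hNR : 0 < N_R) (hNT : 0 < N_T)
    (hK : 0 < K) (hQ : 0 < Q) (σ : ℝ) (hσ : 0 < σ)
    (Sgm : Matrix (Fin N_T × Fin N_R) (Fin N_T × Fin N_R) ℂ)
    (v : Fin Q → Fin N_T → ℂ)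
    (W : Fin Q → Matrix (Fin N_R) (Fin K) ℂ)
    (hW : ∀ q, IsUnit ((W q)ᴴ * W q))
    (Pmat : Fin Q → Matrix (Fin N_R) (Fin K) ℂ)
    (hP1 : ∀ q, (Pmat q)ᴴ * Pmat q = 1)
    (hP2 : ∀ q, Pmat q * (Pmat q)ᴴ = W q * ((W q)ᴴ * W q)⁻¹ * (W q)ᴴ)
    -- `X = [v_1^* ⊗ W_1, …, v_Q^* ⊗ W_Q]`
    (X : Matrix (Fin N_T × Fin N_R) (Fin K × Fin Q) ℂ)
    (hX : X = Matrix.of fun p kq => star (v kq.2 p.1) * W kq.2 p.2 kq.1)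
    -- `Ξ = σ²·blkdiag(W_1ᴴ·W_1, …, W_Qᴴ·W_Q)`
    (Ξ : Matrix (Fin K × Fin Q) (Fin K × Fin Q) ℂ)
    (hΞ : Ξ = Matrix.blockDiagonal fun q => ((σ : ℂ) ^ 2) • ((W q)ᴴ * W q))
    -- `X_Π = [v_1^* ⊗ Π_1, …, v_Q^* ⊗ Π_Q]`
    (XP : Matrix (Fin N_T × Fin N_R) (Fin K × Fin Q) ℂ)
    (hXP : XP = Matrix.of fun p kq => star (v kq.2 p.1) * Pmat kq.2 p.2 kq.1) :
    (1 + Ξ⁻¹ * Xᴴ * Sgm * X).det =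
      (1 + (((σ : ℂ) ^ 2)⁻¹) • (XPᴴ * Sgm * XP)).det := by
  have hσ2 : ((σ : ℂ) ^ 2) ≠ 0 := pow_ne_zero 2 (Complex.ofReal_ne_zero.mpr hσ.ne')
  set R : Fin Q → Matrix (Fin K) (Fin K) ℂ := fun q => (Pmat q)ᴴ * W q with hR
  have hdet : ∀ q, IsUnit ((W q)ᴴ * W q).det := fun q =>
    (isUnit_iff_isUnit_det _).mp (hW q)
  have hWinv : ∀ q, ((W q)ᴴ * W q)⁻¹ * ((W q)ᴴ * W q) = 1 := fun q =>
    nonsing_inv_mul _ (hdet q)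
  -- `Π_q * R_q = W_q`
  have hPR : ∀ q, Pmat q * R q = W q := by
    intro q
    calc Pmat q * ((Pmat q)ᴴ * W q) = (Pmat q * (Pmat q)ᴴ) * W q := by
          rw [Matrix.mul_assoc]
      _ = W q * (((W q)ᴴ * W q)⁻¹ * ((W q)ᴴ * W q)) := by
          rw [hP2 q]; simp only [Matrix.mul_assoc]
      _ = W q := by rw [hWinv q, Matrix.mul_one]
  -- `R_qᴴ * R_q = W_qᴴ * W_q`
  have hRR : ∀ q, (R q)ᴴ * R q = (W q)ᴴ * W q := by
    intro q
    have : (R q)ᴴ = (W q)ᴴ * Pmat q := by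
      simp [hR, Matrix.conjTranspose_mul]
    rw [this, Matrix.mul_assoc, hPR q]
  have hRdet : ∀ q, IsUnit (R q).det := by
    intro q
    have h1 : IsUnit ((R q)ᴴ.det * (R q).det) := by
      rw [← Matrix.det_mul, hRR q]; exact hdet q
    exact (IsUnit.mul_iff.mp h1).2
  have hRHdet : ∀ q, IsUnit ((R q)ᴴ).det := by
    intro q
    have h1 : IsUnit ((R q)ᴴ.det * (R q).det) := by
      rw [← Matrix.det_mul, hRR q]; exact hdet q
    exact (IsUnit.mul_iff.mp h1).1
  -- `(WᴴW)⁻¹ * Rᴴ = R⁻¹`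
  have hkey : ∀ q, ((W q)ᴴ * W q)⁻¹ * (R q)ᴴ = (R q)⁻¹ := by
    intro q
    rw [← hRR q, Matrix.mul_inv_rev, Matrix.mul_assoc,
      nonsing_inv_mul _ (hRHdet q), Matrix.mul_one]
  -- `X = XP * D`
  have hXD : X = XP * Matrix.blockDiagonal R := by
    rw [hX, hXP]
    ext p kq
    obtain ⟨k, q⟩ := kq
    simp only [Matrix.mul_apply, Matrix.of_apply, Matrix.blockDiagonal_apply,
      ← Finset.univ_product_univ, Finset.sum_product_right]
    rw [Finset.sum_eq_single q]
    · have : (Pmat q * R q) p.2 k = W q p.2 k := by rw [hPR q]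
      rw [Matrix.mul_apply] at this
      rw [← this, Finset.mul_sum]
      congr 1; ext j
      simp [mul_assoc]
    · intro b _ hb; simp [hb]
    · simp
  -- inverse of Ξ
  have hΞinv : Ξ⁻¹ = Matrix.blockDiagonal
      fun q => (((σ : ℂ) ^ 2)⁻¹) • ((W q)ᴴ * W q)⁻¹ := by
    apply Matrix.inv_eq_right_inv
    rw [hΞ, ← Matrix.blockDiagonal_mul]
    have h : ∀ q, (((σ : ℂ) ^ 2) • ((W q)ᴴ * W q)) *
        ((((σ : ℂ) ^ 2)⁻¹) • ((W q)ᴴ * W q)⁻¹) = (1 : Matrix (Fin K) (Fin K) ℂ) := by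
      intro q
      rw [Matrix.smul_mul, Matrix.mul_smul, smul_smul, mul_inv_cancel₀ hσ2,
        one_smul, mul_nonsing_inv _ (hdet q)]
    simp only [h]; exact Matrix.blockDiagonal_one
  set D := Matrix.blockDiagonal R with hD
  set Di := Matrix.blockDiagonal (fun q => (R q)⁻¹) with hDi
  have hDiD : Di * D = 1 := by
    rw [hDi, hD, ← Matrix.blockDiagonal_mul]
    have h : ∀ q : Fin Q, (R q)⁻¹ * R q = (1 : Matrix (Fin K) (Fin K) ℂ) :=
      fun q => nonsing_inv_mul _ (hRdet q)
    simp only [h]; exact Matrix.blockDiagonal_one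
  set M := XPᴴ * Sgm * XP with hM
  -- `Ξ⁻¹ * Xᴴ * Σ * X = σ⁻² • (Di * M * D)`
  have hmain : Ξ⁻¹ * Xᴴ * Sgm * X = (((σ : ℂ) ^ 2)⁻¹) • (Di * M * D) := by
    have hEDH : Ξ⁻¹ * Dᴴ = (((σ : ℂ) ^ 2)⁻¹) • Di := by
      rw [hΞinv, hD, Matrix.blockDiagonal_conjTranspose, ← Matrix.blockDiagonal_mul, hDi]
      have h : ∀ q, (((σ : ℂ) ^ 2)⁻¹) • ((W q)ᴴ * W q)⁻¹ * (R q)ᴴ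
          = (((σ : ℂ) ^ 2)⁻¹) • (R q)⁻¹ := by
        intro q; rw [Matrix.smul_mul, hkey q]
      simp only [h]
      rw [← Matrix.blockDiagonal_smul]
      rfl
    rw [hXD, Matrix.conjTranspose_mul, hM]
    calc Ξ⁻¹ * (Dᴴ * XPᴴ) * Sgm * (XP * D)
        = (Ξ⁻¹ * Dᴴ) * (XPᴴ * Sgm * XP * D) := by simp only [Matrix.mul_assoc]
      _ = (((σ : ℂ) ^ 2)⁻¹) • Di * (XPᴴ * Sgm * XP * D) := by rw [hEDH]
      _ = (((σ : ℂ) ^ 2)⁻¹) • (Di * (XPᴴ * Sgm * XP) * D) := by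
          rw [Matrix.smul_mul]; simp only [Matrix.mul_assoc]
  rw [hmain]
  have hconj : 1 + (((σ : ℂ) ^ 2)⁻¹) • (Di * M * D)
      = Di * (1 + (((σ : ℂ) ^ 2)⁻¹) • M) * D := by
    rw [Matrix.mul_add, Matrix.add_mul, Matrix.mul_one, hDiD,
      Matrix.mul_smul, Matrix.smul_mul, Matrix.mul_assoc]
  rw [hconj, Matrix.det_mul, Matrix.det_mul]
  have : Di.det * D.det = 1 := by
    rw [← Matrix.det_mul, hDiD, Matrix.det_one]
  calc Di.det * (1 + (((σ : ℂ) ^ 2)⁻¹) • M).det * D.det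
      = (Di.det * D.det) * (1 + (((σ : ℂ) ^ 2)⁻¹) • M).det := by ring
    _ = (1 + (((σ : ℂ) ^ 2)⁻¹) • M).det := by rw [this, one_mul]
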